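/- Two compactly supported Borel probability measures on ℂ whose (mixed) moments ∫ λ^j · conj(λ)^k dμ all agree for all nonnegative integers j, k are equal. -/

import Mathlib

open MeasureTheory Complex

theorem compactly_supported_measures_eq_of_mixed_moments_eq
    (μ ν : Measure ℂ) [IsProbabilityMeasure μ] [IsProbabilityMeasure ν]
    (K K' : Set ℂ) (hK : IsCompact K) (hK' : IsCompact K')
    (hμK : μ Kᶜ = 0) (hνK : ν K'ᶜ = 0)
    (hmom : ∀ j k : ℕ,
      ∫ z, z ^ j * (starRingEnd ℂ z) ^ k ∂μ =
        ∫ z, z ^ j * (starRingEnd ℂ z) ^ k ∂ν) :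
    μ = ν := by
  classical
  set L : Set ℂ := K ∪ K' with hLdef
  have hL : IsCompact L := hK.union hK'
  haveI : CompactSpace L := isCompact_iff_compactSpace.mp hL
  have hLm : MeasurableSet L := hL.isClosed.measurableSet
  have hμL : μ Lᶜ = 0 := measure_mono_null (by simp [hLdef, Set.compl_union]) hμK
  have hνL : ν Lᶜ = 0 := measure_mono_null (by simp [hLdef, Set.compl_union]) hνK
  set μ' : Measure L := μ.comap (↑) with hμ'def
  set ν' : Measure L := ν.comap (↑) with hν'def
  have hμmap : μ'.map (↑) = μ := by
    rw [hμ'def, map_comap_subtype_coe hLm]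
    exact Measure.restrict_eq_self_of_ae_mem (ae_iff.mpr (by exact hμL))
  have hνmap : ν'.map (↑) = ν := by
    rw [hν'def, map_comap_subtype_coe hLm]
    exact Measure.restrict_eq_self_of_ae_mem (ae_iff.mpr (by exact hνL))
  have hemb : MeasurableEmbedding ((↑) : L → ℂ) := MeasurableEmbedding.subtype_coe hLm
  haveI : IsProbabilityMeasure μ' := by
    constructor
    have := congrArg (fun m : Measure ℂ => m Set.univ) hμmap
    simpa [hemb.map_apply] using this
  haveI : IsProbabilityMeasure ν' := by
    constructor
    have := congrArg (fun m : Measure ℂ => m Set.univ) hνmap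
    simpa [hemb.map_apply] using this
  -- integrability of continuous functions on the compact subtype
  have hint : ∀ (m : Measure L), IsFiniteMeasure m → ∀ f : C(L, ℂ),
      Integrable (fun x => f x) m := fun m hm f =>
    f.continuous.integrable_of_hasCompactSupport (HasCompactSupport.of_compactSpace f)
  -- key: all continuous complex functions have equal integrals
  have key : ∀ f : C(L, ℂ), ∫ x, f x ∂μ' = ∫ x, f x ∂ν' := by
    set g : C(L, ℂ) := ContinuousMap.restrict L (ContinuousMap.id ℂ) with hgdef
    set mono : ℕ × ℕ → C(L, ℂ) := fun p => g ^ p.1 * (star g) ^ p.2 with hmonodef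
    set M : Submodule ℂ C(L, ℂ) := Submodule.span ℂ (Set.range mono) with hMdef
    -- moments transported to the subtype
    have hgen : ∀ p : ℕ × ℕ, ∫ x, mono p x ∂μ' = ∫ x, mono p x ∂ν' := by
      rintro ⟨j, k⟩
      have hF : Continuous fun z : ℂ => z ^ j * (starRingEnd ℂ) z ^ k := by
        exact (continuous_pow j).mul ((continuous_star).pow k)
      have hμ : ∫ x : L, ((x : ℂ) ^ j * (starRingEnd ℂ) (x : ℂ) ^ k) ∂μ'
          = ∫ z, z ^ j * (starRingEnd ℂ) z ^ k ∂μ := by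
        rw [← hμmap, integral_map measurable_subtype_coe.aemeasurable
          hF.aestronglyMeasurable]
      have hν : ∫ x : L, ((x : ℂ) ^ j * (starRingEnd ℂ) (x : ℂ) ^ k) ∂ν'
          = ∫ z, z ^ j * (starRingEnd ℂ) z ^ k ∂ν := by
        rw [← hνmap, integral_map measurable_subtype_coe.aemeasurable
          hF.aestronglyMeasurable]
      have : ∀ x : L, mono (j, k) x = (x : ℂ) ^ j * (starRingEnd ℂ) (x : ℂ) ^ k := by
        intro x
        simp only [hmonodef, hgdef, ContinuousMap.mul_apply, ContinuousMap.pow_apply,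
          ContinuousMap.star_apply, ContinuousMap.restrict_apply, ContinuousMap.id_apply,
          starRingEnd_apply]
      simp only [this]
      rw [hμ, hν, hmom j k]
    -- M is closed under multiplication
    have hMmul : ∀ a b : C(L, ℂ), a ∈ M → b ∈ M → a * b ∈ M := by
      intro a b ha hb
      have hsub : M * M ≤ M := by
        rw [hMdef, Submodule.span_mul_span]
        refine Submodule.span_le.2 ?_
        rw [Set.mul_subset_iff]
        rintro x ⟨p, rfl⟩ y ⟨q, rfl⟩
        refine Submodule.subset_span ⟨(p.1 + q.1, p.2 + q.2), ?_⟩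
        simp only [hmonodef, pow_add]
        ring
      exact hsub (Submodule.mul_mem_mul ha hb)
    -- every element of the star-closure of polynomial functions lies in M
    have hSC : ∀ f ∈ (polynomialFunctions L).starClosure, f ∈ M := by
      intro f hf
      rw [polynomialFunctions.starClosure_eq_adjoin_X] at hf
      induction hf using Algebra.adjoin_induction with
      | mem f hf =>
        simp only [Set.mem_union, Set.mem_singleton_iff, Set.mem_star] at hf
        rw [star_eq_iff_star_eq, eq_comm (b := f)] at hf
        obtain (rfl | rfl) := hf
        · refine Submodule.subset_span ⟨(1, 0), ?_⟩
          simp [hmonodef, hgdef, Polynomial.toContinuousMapOn_X_eq_restrict_id]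
        · refine Submodule.subset_span ⟨(0, 1), ?_⟩
          simp [hmonodef, hgdef, Polynomial.toContinuousMapOn_X_eq_restrict_id]
      | algebraMap r =>
        rw [Algebra.algebraMap_eq_smul_one]
        refine M.smul_mem r (Submodule.subset_span ⟨(0, 0), ?_⟩)
        simp [hmonodef]
      | add _ _ _ _ hfa hfb => exact M.add_mem hfa hfb
      | mul a b _ _ hfa hfb => exact hMmul a b hfa hfb
    -- elements of M have equal integrals
    have hQ : ∀ f ∈ M, ∫ x, f x ∂μ' = ∫ x, f x ∂ν' := by
      intro f hf
      induction hf using Submodule.span_induction with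
      | mem f hf => obtain ⟨p, rfl⟩ := hf; exact hgen p
      | zero => simp
      | add a b _ _ ha hb =>
        rw [show ((a + b : C(L, ℂ)) : L → ℂ) = fun x => a x + b x from rfl]
        rw [integral_add (hint μ' inferInstance a) (hint μ' inferInstance b),
          integral_add (hint ν' inferInstance a) (hint ν' inferInstance b), ha, hb]
      | smul c a _ ha =>
        rw [show ((c • a : C(L, ℂ)) : L → ℂ) = fun x => c • a x from rfl]
        rw [integral_smul, integral_smul, ha]
    -- the integral functionals are continuous
    have hcont : ∀ (m : Measure L), IsProbabilityMeasure m →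
        Continuous fun f : C(L, ℂ) => ∫ x, f x ∂m := by
      intro m hm
      have : LipschitzWith 1 fun f : C(L, ℂ) => ∫ x, f x ∂m := by
        intro f h
        rw [edist_eq_enorm_sub, edist_eq_enorm_sub]
        have h1 : ∫ x, f x ∂m - ∫ x, h x ∂m = ∫ x, (f x - h x) ∂m := by
          rw [integral_sub (hint m inferInstance f) (hint m inferInstance h)]
        have h2 : ‖∫ x, (f x - h x) ∂m‖ ≤ ‖f - h‖ * (m Set.univ).toReal := by
          apply norm_integral_le_of_norm_le_const
          filter_upwards with x
          exact (ContinuousMap.norm_coe_le_norm (f - h) x)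
        rw [measure_univ] at h2
        simp only [ENNReal.toReal_one, mul_one] at h2
        calc (‖∫ x, f x ∂m - ∫ x, h x ∂m‖₊ : ENNReal)
            ≤ (‖f - h‖₊ : ENNReal) := by
              rw [h1]
              exact_mod_cast h2
          _ = 1 * (‖f - h‖₊ : ENNReal) := (one_mul _).symm
      exact this.continuous
    -- density via Stone–Weierstrass
    intro f
    have hdense := polynomialFunctions.starClosure_topologicalClosure L
    have hf : f ∈ ((polynomialFunctions L).starClosure.topologicalClosure : Set C(L, ℂ)) := by
      rw [hdense]; trivial
    have hclosed : IsClosed {f : C(L, ℂ) | ∫ x, f x ∂μ' = ∫ x, f x ∂ν'} :=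
      isClosed_eq (hcont μ' inferInstance) (hcont ν' inferInstance)
    have hsubset : ((polynomialFunctions L).starClosure : Set C(L, ℂ)) ⊆
        {f : C(L, ℂ) | ∫ x, f x ∂μ' = ∫ x, f x ∂ν'} := fun f hf => hQ f (hSC f hf)
    have : closure ((polynomialFunctions L).starClosure : Set C(L, ℂ)) ⊆
        {f : C(L, ℂ) | ∫ x, f x ∂μ' = ∫ x, f x ∂ν'} := closure_minimal hsubset hclosed
    exact this (by simpa [StarSubalgebra.topologicalClosure] using hf)
  -- conclude μ' = ν' via lintegrals of bounded continuous functions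
  have hμν' : μ' = ν' := by
    apply ext_of_forall_lintegral_eq_of_IsFiniteMeasure
    intro f
    have hre : ∫ x, ((RCLike.ofReal : ℝ → ℂ) (f x : ℝ)) ∂μ'
        = ∫ x, ((RCLike.ofReal : ℝ → ℂ) (f x : ℝ)) ∂ν' := by
      exact key ⟨fun x => (RCLike.ofReal : ℝ → ℂ) (f x : ℝ), by
        exact RCLike.continuous_ofReal.comp (NNReal.continuous_coe.comp f.continuous)⟩
    rw [integral_ofReal, integral_ofReal] at hre
    have hre' : ∫ x, (f x : ℝ) ∂μ' = ∫ x, (f x : ℝ) ∂ν' := by exact_mod_cast hre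
    have hi1 : Integrable (fun x => (f x : ℝ)) μ' :=
      (NNReal.continuous_coe.comp f.continuous).integrable_of_hasCompactSupport
        (HasCompactSupport.of_compactSpace _)
    have hi2 : Integrable (fun x => (f x : ℝ)) ν' :=
      (NNReal.continuous_coe.comp f.continuous).integrable_of_hasCompactSupport
        (HasCompactSupport.of_compactSpace _)
    calc ∫⁻ x, (f x : ENNReal) ∂μ'
        = ENNReal.ofReal (∫ x, (f x : ℝ) ∂μ') := lintegral_coe_eq_integral _ hi1
      _ = ENNReal.ofReal (∫ x, (f x : ℝ) ∂ν') := by rw [hre']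
      _ = ∫⁻ x, (f x : ENNReal) ∂ν' := (lintegral_coe_eq_integral _ hi2).symm
  rw [← hμmap, ← hνmap, hμν']
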